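/- arXiv:1908.11070 — 4 statements merged into one kernel-verified Lean document; each statement's English description precedes it below -/
import Mathlib

section
/- For every natural number k and real θ, if X ~ N(θ,1), then E[H_k(X)^2] ≤ (k + θ^2)^k, where H_k is the k-th probabilist's Hermite polynomial. -/
open MeasureTheory ProbabilityTheory Polynomial

namespace HermiteAux

open Real Filter Set

/-- Real Hermite polynomial. -/
noncomputable def Hr (n : ℕ) : ℝ[X] := (hermite n).map (Int.castRingHom ℝ)

lemma Hr_zero : Hr 0 = 1 := by simp [Hr, hermite_zero]

lemma Hr_succ (n : ℕ) : Hr (n + 1) = X * Hr n - derivative (Hr n) := by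
  simp [Hr, hermite_succ, Polynomial.derivative_map]

lemma Hr_one : Hr 1 = X := by simp [Hr, hermite_one]

lemma aeval_eq_Hr (n : ℕ) (x : ℝ) : (aeval x (hermite n) : ℝ) = (Hr n).eval x := by
  rw [Hr, eval_map, aeval_def]; rfl

lemma natDegree_Hr (n : ℕ) : (Hr n).natDegree = n := by
  rw [Hr, natDegree_map_eq_of_injective Int.cast_injective]
  exact natDegree_hermite

lemma derivative_Hr (n : ℕ) : derivative (Hr (n + 1)) = ((n : ℝ) + 1) • Hr n := by
  induction n with
  | zero => simp [Hr_one, Hr_zero]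
  | succ n ih =>
      rw [Hr_succ (n + 1), derivative_sub, derivative_mul, derivative_X, one_mul, ih,
        derivative_smul, mul_smul_comm, add_sub_assoc, ← smul_sub, ← Hr_succ n]
      push_cast
      module

/-- Translation identity for Hermite polynomials. -/
lemma Hr_comp (k : ℕ) (t : ℝ) :
    (Hr k).comp (X + C t) =
      ∑ j ∈ Finset.range (k + 1), ((k.choose j : ℝ) * t ^ (k - j)) • Hr j := by
  induction k with
  | zero => simp [Hr_zero]
  | succ k ih =>
      have hds : derivative (X + C t) = 1 := by simp
      have hL : (Hr (k + 1)).comp (X + C t)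
          = (X + C t) * ((Hr k).comp (X + C t)) - derivative ((Hr k).comp (X + C t)) := by
        rw [Hr_succ, sub_comp, mul_comp, X_comp, derivative_comp, hds, one_mul]
      rw [hL, ih]
      -- expand
      rw [Finset.mul_sum, derivative_sum]
      have key : ∀ j, (X + C t) * (((k.choose j : ℝ) * t ^ (k - j)) • Hr j)
            - derivative (((k.choose j : ℝ) * t ^ (k - j)) • Hr j)
          = ((k.choose j : ℝ) * t ^ (k - j)) • Hr (j + 1)
            + (t * ((k.choose j : ℝ) * t ^ (k - j))) • Hr j := by
        intro j
        have hCt : C t * Hr j = t • Hr j := (smul_eq_C_mul t).symm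
        rw [derivative_smul, mul_smul_comm, add_mul, smul_add, Hr_succ, smul_sub, hCt,
          smul_smul, mul_comm ((k.choose j : ℝ) * t ^ (k - j)) t]
        abel
      rw [← Finset.sum_sub_distrib]
      calc (∑ j ∈ Finset.range (k + 1),
              ((X + C t) * (((k.choose j : ℝ) * t ^ (k - j)) • Hr j)
               - derivative (((k.choose j : ℝ) * t ^ (k - j)) • Hr j)))
          = ∑ j ∈ Finset.range (k + 1),
              (((k.choose j : ℝ) * t ^ (k - j)) • Hr (j + 1)
                + (t * ((k.choose j : ℝ) * t ^ (k - j))) • Hr j) := by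
            exact Finset.sum_congr rfl fun j _ => key j
        _ = ∑ j ∈ Finset.range (k + 2), (((k + 1).choose j : ℝ) * t ^ (k + 1 - j)) • Hr j := by
            rw [Finset.sum_add_distrib]
            -- second sum: peel off j = 0 and extend
            have h2 : (∑ j ∈ Finset.range (k + 1), (t * ((k.choose j : ℝ) * t ^ (k - j))) • Hr j)
                = (∑ j ∈ Finset.range (k + 1),
                    (t * ((k.choose (j + 1) : ℝ) * t ^ (k - (j + 1)))) • Hr (j + 1))
                  + (t * ((k.choose 0 : ℝ) * t ^ (k - 0))) • Hr 0 := by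
              rw [Finset.sum_range_succ
                (fun j => (t * ((k.choose (j + 1) : ℝ) * t ^ (k - (j + 1)))) • Hr (j + 1)) k]
              rw [Nat.choose_succ_self]
              simp only [Nat.cast_zero, zero_mul, mul_zero, zero_smul, add_zero]
              exact Finset.sum_range_succ'
                (fun j => (t * ((k.choose j : ℝ) * t ^ (k - j))) • Hr j) k
            rw [h2]
            rw [Finset.sum_range_succ'
              (fun j => (((k + 1).choose j : ℝ) * t ^ (k + 1 - j)) • Hr j) (k + 1)]
            rw [← add_assoc, ← Finset.sum_add_distrib]
            have hc0 : (t * ((k.choose 0 : ℝ) * t ^ (k - 0))) • Hr 0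
                = (((k + 1).choose 0 : ℝ) * t ^ (k + 1 - 0)) • Hr 0 := by
              congr 1
              norm_num
              rw [pow_succ]; ring
            rw [hc0]
            congr 1
            refine Finset.sum_congr rfl fun j hj => ?_
            rw [Finset.mem_range] at hj
            rw [← add_smul]
            congr 1
            rcases Nat.lt_or_ge j k with h | h
            · have h1 : k - j = (k - (j + 1)) + 1 := by omega
              have h2 : k + 1 - (j + 1) = k - j := by omega
              rw [h2, Nat.choose_succ_succ (k) (j)]
              push_cast
              rw [h1, pow_succ]
              ring
            · have hjk : j = k := by omega
              subst hjk
              simp [Nat.choose_succ_self, Nat.choose_self]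

/-- iterated derivative of `Hr n` -/
lemma iterate_derivative_Hr_self (n : ℕ) : derivative^[n] (Hr n) = C ((Nat.factorial n : ℝ)) := by
  induction n with
  | zero => simp [Hr_zero]
  | succ n ih =>
      rw [Function.iterate_succ_apply, derivative_Hr, Polynomial.iterate_derivative_smul, ih]
      rw [smul_C]
      congr 1
      rw [smul_eq_mul]
      push_cast [Nat.factorial_succ]
      ring

/-- The Gaussian weight. -/
noncomputable def gw (x : ℝ) : ℝ := Real.exp (-(x ^ 2 / 2))

lemma integrable_monomial_gw (n : ℕ) : Integrable (fun x : ℝ => x ^ n * gw x) := by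
  have h := integrable_rpow_mul_exp_neg_mul_sq (b := 1/2) (by norm_num)
    (s := n) (by exact_mod_cast neg_one_lt_zero.trans_le (Nat.cast_nonneg n))
  convert h using 2 with x
  rw [Real.rpow_natCast, gw]; ring_nf

lemma integrable_poly_gw (p : ℝ[X]) : Integrable (fun x : ℝ => p.eval x * gw x) := by
  have heq : (fun x : ℝ => p.eval x * gw x)
      = fun x => ∑ i ∈ Finset.range (p.natDegree + 1), p.coeff i * (x ^ i * gw x) := by
    ext x
    rw [Polynomial.eval_eq_sum_range, Finset.sum_mul]
    exact Finset.sum_congr rfl fun i _ => by ring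
  rw [heq]
  exact integrable_finset_sum _ fun i _ => (integrable_monomial_gw i).const_mul _

lemma tendsto_monomial_gw (n : ℕ) :
    Tendsto (fun x : ℝ => x ^ n * gw x) (cocompact ℝ) (nhds 0) := by
  have h := tendsto_rpow_abs_mul_exp_neg_mul_sq_cocompact (a := 1/2) (by norm_num) n
  apply squeeze_zero_norm _ h
  intro x
  rw [norm_mul, Real.rpow_natCast, Real.norm_eq_abs, Real.norm_eq_abs, abs_pow, gw,
    abs_of_pos (Real.exp_pos _)]
  apply le_of_eq; congr 2; ring

lemma tendsto_poly_gw (p : ℝ[X]) :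
    Tendsto (fun x : ℝ => p.eval x * gw x) (cocompact ℝ) (nhds 0) := by
  have heq : (fun x : ℝ => p.eval x * gw x)
      = fun x => ∑ i ∈ Finset.range (p.natDegree + 1), p.coeff i * (x ^ i * gw x) := by
    ext x
    rw [Polynomial.eval_eq_sum_range, Finset.sum_mul]
    exact Finset.sum_congr rfl fun i _ => by ring
  rw [heq]
  have : Tendsto (fun x : ℝ => ∑ i ∈ Finset.range (p.natDegree + 1), p.coeff i * (x ^ i * gw x))
      (cocompact ℝ) (nhds (∑ i ∈ Finset.range (p.natDegree + 1), p.coeff i * 0)) :=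
    tendsto_finset_sum _ fun i _ => (tendsto_monomial_gw i).const_mul _
  simpa using this

lemma integral_deriv_zero {F F' : ℝ → ℝ} (hd : ∀ x, HasDerivAt F (F' x) x)
    (hi : Integrable F') (ht : Tendsto F (cocompact ℝ) (nhds 0)) : ∫ x, F' x = 0 := by
  rw [cocompact_eq_atBot_atTop] at ht
  have htBot : Tendsto F atBot (nhds 0) := ht.mono_left le_sup_left
  have htTop : Tendsto F atTop (nhds 0) := ht.mono_left le_sup_right
  have h1 : ∫ x in Iic (0:ℝ), F' x = F 0 - 0 :=
    integral_Iic_of_hasDerivAt_of_tendsto (hd 0).continuousAt.continuousWithinAt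
      (fun x _ => hd x) hi.integrableOn htBot
  have h2 : ∫ x in Ioi (0:ℝ), F' x = 0 - F 0 :=
    integral_Ioi_of_hasDerivAt_of_tendsto (hd 0).continuousAt.continuousWithinAt
      (fun x _ => hd x) hi.integrableOn htTop
  rw [← intervalIntegral.integral_Iic_add_Ioi hi.integrableOn hi.integrableOn, h1, h2]
  ring

lemma hasDerivAt_gw (x : ℝ) : HasDerivAt gw (-x * gw x) x := by
  have h1 : HasDerivAt (fun x : ℝ => -(x ^ 2 / 2)) (-x) x := by
    have := ((hasDerivAt_pow 2 x).div_const 2).neg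
    simp at this
    exact this
  have h2 := h1.exp
  unfold gw
  convert h2 using 1
  ring

lemma hasDerivAt_poly_gw (q : ℝ[X]) (x : ℝ) :
    HasDerivAt (fun x => q.eval x * gw x)
      ((derivative q).eval x * gw x - (X * q).eval x * gw x) x := by
  have h := (q.hasDerivAt x).mul (hasDerivAt_gw x)
  refine h.congr_deriv ?_
  simp [gw]; ring

/-- Integration by parts. -/
lemma byparts (p : ℝ[X]) (n : ℕ) :
    ∫ x, (p * Hr (n + 1)).eval x * gw x = ∫ x, (derivative p * Hr n).eval x * gw x := by
  have key : ∫ x, ((derivative p * Hr n).eval x * gw x - (p * Hr (n + 1)).eval x * gw x) = 0 := by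
    apply integral_deriv_zero (F := fun x => (p * Hr n).eval x * gw x)
    · intro x
      have h := hasDerivAt_poly_gw (p * Hr n) x
      convert h using 1
      have hpoly : derivative p * Hr n - p * Hr (n + 1)
          = derivative (p * Hr n) - X * (p * Hr n) := by
        rw [Hr_succ, derivative_mul]; ring
      have := congrArg (fun q => Polynomial.eval x q * gw x) hpoly
      simp only [Polynomial.eval_sub, Polynomial.eval_mul] at this ⊢
      linarith [this]
    · have := (integrable_poly_gw (derivative p * Hr n)).sub (integrable_poly_gw (p * Hr (n + 1)))
      exact this
    · exact tendsto_poly_gw (p * Hr n)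
  have hint := integral_sub (integrable_poly_gw (derivative p * Hr n))
    (integrable_poly_gw (p * Hr (n + 1)))
  rw [hint] at key
  linarith

lemma integral_poly_mul_Hr (n : ℕ) (p : ℝ[X]) :
    ∫ x, (p * Hr n).eval x * gw x = ∫ x, (derivative^[n] p).eval x * gw x := by
  induction n generalizing p with
  | zero => simp [Hr_zero]
  | succ n ih =>
      rw [byparts p n, ih (derivative p), Function.iterate_succ_apply]

lemma integral_gw : ∫ x, gw x = Real.sqrt (2 * Real.pi) := by
  have := integral_gaussian (1/2)
  rw [show Real.sqrt (Real.pi / (1/2)) = Real.sqrt (2 * Real.pi) by ring_nf] at this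
  rw [← this]
  congr 1; ext x; rw [gw]; ring_nf

/-- Orthogonality of Hermite polynomials. -/
lemma ortho_le {m n : ℕ} (hmn : m ≤ n) :
    ∫ x, (Hr m * Hr n).eval x * gw x
      = (if m = n then (Nat.factorial n : ℝ) else 0) * Real.sqrt (2 * Real.pi) := by
  rw [integral_poly_mul_Hr]
  rcases eq_or_lt_of_le hmn with rfl | hlt
  · rw [iterate_derivative_Hr_self, if_pos rfl]
    simp only [Polynomial.eval_C]
    rw [MeasureTheory.integral_const_mul, integral_gw]
  · have hz : derivative^[n] (Hr m) = 0 :=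
      Polynomial.iterate_derivative_eq_zero (by rw [natDegree_Hr]; exact_mod_cast hlt)
    rw [hz, if_neg (Nat.ne_of_lt hlt)]
    simp

lemma ortho (m n : ℕ) :
    ∫ x, (Hr m * Hr n).eval x * gw x
      = (if m = n then (Nat.factorial n : ℝ) else 0) * Real.sqrt (2 * Real.pi) := by
  rcases le_or_gt m n with h | h
  · exact ortho_le h
  · rw [mul_comm (Hr m) (Hr n), ortho_le h.le]
    simp [Nat.ne_of_lt h, (Nat.ne_of_lt h).symm]

lemma integral_sum_poly_gw {s : Finset ℕ} (f : ℕ → ℝ[X]) :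
    ∫ x, (∑ j ∈ s, f j).eval x * gw x = ∑ j ∈ s, ∫ x, (f j).eval x * gw x := by
  have heq : (fun x : ℝ => (∑ j ∈ s, f j).eval x * gw x)
      = fun x => ∑ j ∈ s, (f j).eval x * gw x := by
    ext x; rw [Polynomial.eval_finset_sum, Finset.sum_mul]
  rw [heq]
  exact integral_finset_sum _ fun j _ => integrable_poly_gw (f j)

end HermiteAux

open HermiteAux Real Filter

/-- For every natural `k` and real `θ`, if `X ~ N(θ,1)` then
`E[H_k(X)^2] ≤ (k + θ^2)^k` for the probabilist's Hermite polynomial `H_k`. -/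
theorem hermite_sq_expectation_le (k : ℕ) (θ : ℝ) :
    ∫ x, ((Polynomial.aeval x (Polynomial.hermite k) : ℝ)) ^ 2 ∂(gaussianReal θ 1)
      ≤ ((k : ℝ) + θ ^ 2) ^ k := by
  classical
  set sq2pi := Real.sqrt (2 * Real.pi) with hsq
  have hsq_pos : 0 < sq2pi := Real.sqrt_pos.2 (by positivity)
  -- Step 1: write the integral against the Lebesgue density
  have h1 : ∫ x, ((Polynomial.aeval x (Polynomial.hermite k) : ℝ)) ^ 2 ∂(gaussianReal θ 1)
      = ∫ x, gaussianPDFReal θ 1 x * ((Hr k).eval x) ^ 2 := by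
    rw [gaussianReal_of_var_ne_zero θ one_ne_zero]
    have hpdf : gaussianPDF θ 1 = fun x => ((gaussianPDFReal θ 1 x).toNNReal : ENNReal) := by
      ext x; rfl
    rw [hpdf]
    rw [integral_withDensity_eq_integral_smul
      (by exact (measurable_gaussianPDFReal θ 1).real_toNNReal) _]
    congr 1; ext x
    rw [NNReal.smul_def, smul_eq_mul, Real.coe_toNNReal _ (gaussianPDFReal_nonneg θ 1 x),
      aeval_eq_Hr]
  -- Step 2: explicit density
  have h2 : ∀ x : ℝ, gaussianPDFReal θ 1 x = sq2pi⁻¹ * Real.exp (-((x - θ) ^ 2 / 2)) := by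
    intro x
    rw [gaussianPDFReal]
    norm_num
    rw [hsq, Real.sqrt_mul (by norm_num : (0:ℝ) ≤ 2), mul_inv, neg_div]
    ring
  -- Step 3: change variables
  have h3 : ∫ x, gaussianPDFReal θ 1 x * ((Hr k).eval x) ^ 2
      = sq2pi⁻¹ * ∫ x, ((Hr k).eval (x + θ)) ^ 2 * gw x := by
    rw [← integral_const_mul]
    rw [← integral_add_right_eq_self
      (fun x => gaussianPDFReal θ 1 x * ((Hr k).eval x) ^ 2) θ]
    congr 1; ext x
    rw [h2]
    simp only [add_sub_cancel_right, gw]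
    ring
  -- Step 4: expand in Hermite basis
  set a : ℕ → ℝ := fun j => (k.choose j : ℝ) * θ ^ (k - j) with ha
  have hcomp : ∀ x : ℝ, (Hr k).eval (x + θ)
      = (∑ j ∈ Finset.range (k + 1), a j • Hr j).eval x := by
    intro x
    rw [← Hr_comp k θ, Polynomial.eval_comp]
    simp
  have h4 : ∫ x, ((Hr k).eval (x + θ)) ^ 2 * gw x
      = ∑ j ∈ Finset.range (k + 1), (a j) ^ 2 * (Nat.factorial j : ℝ) * sq2pi := by
    have hTT : ∀ x : ℝ, ((Hr k).eval (x + θ)) ^ 2 * gw x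
        = (∑ i ∈ Finset.range (k + 1), ∑ j ∈ Finset.range (k + 1),
            (a i * a j) • (Hr i * Hr j)).eval x * gw x := by
      intro x
      rw [hcomp]
      congr 1
      rw [sq, ← Polynomial.eval_mul, Finset.sum_mul_sum]
      congr 1
      refine Finset.sum_congr rfl fun i _ => Finset.sum_congr rfl fun j _ => ?_
      rw [smul_mul_smul_comm, mul_smul]
    rw [integral_congr_ae (Filter.Eventually.of_forall hTT)]
    rw [integral_sum_poly_gw]
    have hinner : ∀ i ∈ Finset.range (k + 1),
        ∫ x, (∑ j ∈ Finset.range (k + 1), (a i * a j) • (Hr i * Hr j)).eval x * gw x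
          = (a i) ^ 2 * (Nat.factorial i : ℝ) * sq2pi := by
      intro i hi
      rw [integral_sum_poly_gw]
      have : ∀ j ∈ Finset.range (k + 1),
          ∫ x, ((a i * a j) • (Hr i * Hr j)).eval x * gw x
            = (a i * a j) * ((if i = j then (Nat.factorial j : ℝ) else 0) * sq2pi) := by
        intro j _
        have : (fun x => ((a i * a j) • (Hr i * Hr j)).eval x * gw x)
            = fun x => (a i * a j) * ((Hr i * Hr j).eval x * gw x) := by
          ext x; rw [Polynomial.eval_smul, smul_eq_mul]; ring
        rw [this, integral_const_mul, ortho]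
      rw [Finset.sum_congr rfl this]
      have hsum : ∀ j ∈ Finset.range (k + 1),
          a i * a j * ((if i = j then (Nat.factorial j : ℝ) else 0) * sq2pi)
            = if i = j then a i * a j * ((Nat.factorial j : ℝ) * sq2pi) else 0 := by
        intro j _
        split <;> simp
      rw [Finset.sum_congr rfl hsum,
        Finset.sum_ite_eq (Finset.range (k + 1)) i
          (fun j => a i * a j * ((Nat.factorial j : ℝ) * sq2pi)), if_pos hi]
      ring
    rw [Finset.sum_congr rfl hinner]
  -- Step 5: conclude with the bound
  rw [h1, h3, h4]
  have hcollapse : sq2pi⁻¹ * (∑ j ∈ Finset.range (k + 1), (a j) ^ 2 * (Nat.factorial j : ℝ) * sq2pi)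
      = ∑ j ∈ Finset.range (k + 1), (a j) ^ 2 * (Nat.factorial j : ℝ) := by
    rw [← Finset.sum_mul, mul_comm, mul_assoc, mul_inv_cancel₀ hsq_pos.ne', mul_one]
  rw [hcollapse]
  have hbound : ∀ j ∈ Finset.range (k + 1),
      (a j) ^ 2 * (Nat.factorial j : ℝ) ≤ (k : ℝ) ^ j * (θ ^ 2) ^ (k - j) * (k.choose j : ℝ) := by
    intro j _
    have hnat : (k.choose j) ^ 2 * Nat.factorial j ≤ k.choose j * k ^ j := by
      have h1 : k.choose j * Nat.factorial j = k.descFactorial j := by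
        rw [Nat.descFactorial_eq_factorial_mul_choose]; ring
      calc (k.choose j) ^ 2 * Nat.factorial j = k.choose j * (k.choose j * Nat.factorial j) := by ring
        _ = k.choose j * k.descFactorial j := by rw [h1]
        _ ≤ k.choose j * k ^ j := Nat.mul_le_mul_left _ (Nat.descFactorial_le_pow k j)
    have hr : ((k.choose j : ℝ)) ^ 2 * (Nat.factorial j : ℝ) ≤ (k.choose j : ℝ) * (k : ℝ) ^ j := by
      exact_mod_cast hnat
    have hθ : (0 : ℝ) ≤ (θ ^ 2) ^ (k - j) := by positivity
    calc (a j) ^ 2 * (Nat.factorial j : ℝ)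
        = ((k.choose j : ℝ)) ^ 2 * (Nat.factorial j : ℝ) * (θ ^ 2) ^ (k - j) := by
          rw [ha]; rw [← pow_mul, mul_comm 2 (k - j), pow_mul]; ring
      _ ≤ (k.choose j : ℝ) * (k : ℝ) ^ j * (θ ^ 2) ^ (k - j) :=
          mul_le_mul_of_nonneg_right hr hθ
      _ = (k : ℝ) ^ j * (θ ^ 2) ^ (k - j) * (k.choose j : ℝ) := by ring
  calc ∑ j ∈ Finset.range (k + 1), (a j) ^ 2 * (Nat.factorial j : ℝ)
      ≤ ∑ j ∈ Finset.range (k + 1), (k : ℝ) ^ j * (θ ^ 2) ^ (k - j) * (k.choose j : ℝ) :=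
        Finset.sum_le_sum hbound
    _ = ((k : ℝ) + θ ^ 2) ^ k := (add_pow (k : ℝ) (θ ^ 2) k).symm
end

section
/- Let F be continuous on [-M, M] with M > 0, let K be a positive integer, and suppose the best uniform polynomial approximation error δ_{K,M} = inf_{P ∈ P_K} ||F - P||_{∞,[-M,M]} is strictly positive. Then there exist probability measures ν₀, ν₁ on [-M, M] such that ∫ t^l dν₀(t) = ∫ t^l dν₁(t) for all l = 0, ..., K, and ∫ F dν₀ - ∫ F dν₁ = 2 δ_{K,M}. -/
open MeasureTheory Set Pointwise

private lemma fin_pad_sum {Mo : Type*} [AddCommMonoid Mo] {m n : ℕ} (h : m ≤ n) (G : Fin m → Mo) :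
    (∑ i : Fin n, if h' : (i : ℕ) < m then G ⟨i, h'⟩ else 0) = ∑ i : Fin m, G i := by
  rw [Fin.sum_univ_eq_sum_range (fun k => if h' : k < m then G ⟨k, h'⟩ else 0) n,
    ← Finset.sum_subset (Finset.range_subset_range.mpr h)
      (fun k _ hk => by rw [dif_neg (by simpa using hk)]),
    ← Fin.sum_univ_eq_sum_range (fun k => if h' : k < m then G ⟨k, h'⟩ else 0) m]
  simp

private lemma isCompact_convexHull_of_isCompact {E : Type*} [NormedAddCommGroup E]
    [NormedSpace ℝ E] [FiniteDimensional ℝ E] {s : Set E} (hs : IsCompact s) :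
    IsCompact (convexHull ℝ s) := by
  rcases s.eq_empty_or_nonempty with rfl | ⟨p₀, hp₀⟩
  · simp
  set n := Module.finrank ℝ E + 1 with hn
  have hΦ : Continuous (fun q : (Fin n → ℝ) × (Fin n → E) => ∑ i : Fin n, q.1 i • q.2 i) := by
    refine continuous_finset_sum _ fun i _ => ?_
    exact ((continuous_apply i).comp continuous_fst).smul ((continuous_apply i).comp continuous_snd)
  have hK : IsCompact ((stdSimplex ℝ (Fin n)) ×ˢ (Set.univ.pi fun _ : Fin n => s)) :=
    (isCompact_stdSimplex (𝕜 := ℝ) (ι := Fin n)).prod (isCompact_univ_pi fun _ => hs)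
  have himg : convexHull ℝ s =
      (fun q : (Fin n → ℝ) × (Fin n → E) => ∑ i : Fin n, q.1 i • q.2 i) ''
        ((stdSimplex ℝ (Fin n)) ×ˢ (Set.univ.pi fun _ : Fin n => s)) := by
    apply Set.Subset.antisymm
    · intro x hx
      rw [convexHull_eq_union] at hx
      obtain ⟨t, ht⟩ := Set.mem_iUnion.1 hx
      obtain ⟨hts, ht2⟩ := Set.mem_iUnion.1 ht
      obtain ⟨hai, hxt⟩ := Set.mem_iUnion.1 ht2
      have hcard : t.card ≤ n := by
        have h1 := hai.card_le_finrank_succ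
        rw [Fintype.card_coe] at h1
        exact le_trans h1 (by
          have := Submodule.finrank_le (vectorSpan ℝ (Set.range (Subtype.val : t → E)))
          omega)
      rw [Finset.convexHull_eq] at hxt
      obtain ⟨w, hw0, hw1, hcm⟩ := hxt
      rw [Finset.centerMass_eq_of_sum_1 _ _ hw1] at hcm
      simp only [id_eq] at hcm
      set e := t.equivFin
      refine ⟨(fun i => if h' : (i : ℕ) < t.card then w (e.symm ⟨i, h'⟩) else 0,
        fun i => if h' : (i : ℕ) < t.card then (e.symm ⟨i, h'⟩ : E) else p₀), ⟨?_, ?_⟩, ?_⟩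
      · constructor
        · intro i
          by_cases h' : (i : ℕ) < t.card
          · simpa [h'] using hw0 _ (e.symm ⟨i, h'⟩).2
          · simp [h']
        · rw [fin_pad_sum hcard (fun i => w (e.symm i))]
          rw [← hw1, ← Finset.sum_coe_sort t w]
          exact Equiv.sum_comp e.symm (fun y : {x // x ∈ t} => w (y : E))
      · intro i _
        by_cases h' : (i : ℕ) < t.card
        · simpa [h'] using hts (e.symm ⟨i, h'⟩).2
        · simpa [h'] using hp₀
      · simp only
        have : (∑ i : Fin n, (if h' : (i : ℕ) < t.card then w (e.symm ⟨i, h'⟩) else 0) •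
            (if h' : (i : ℕ) < t.card then (e.symm ⟨i, h'⟩ : E) else p₀)) =
            ∑ i : Fin n, (if h' : (i : ℕ) < t.card
              then w (e.symm ⟨i, h'⟩) • (e.symm ⟨i, h'⟩ : E) else 0) := by
          refine Finset.sum_congr rfl fun i _ => ?_
          by_cases h' : (i : ℕ) < t.card <;> simp [h']
        rw [this, fin_pad_sum hcard (fun i => w (e.symm i) • (e.symm i : E))]
        rw [Equiv.sum_comp e.symm (fun y : {x // x ∈ t} => w (y : E) • (y : E))]
        rw [← hcm]
        exact Finset.sum_coe_sort t (fun y => w y • y)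
    · rintro x ⟨⟨q1, q2⟩, ⟨hq1, hq2⟩, rfl⟩
      exact Convex.sum_mem (convex_convexHull ℝ s) (fun i _ => hq1.1 i) hq1.2
        (fun i _ => subset_convexHull ℝ s (hq2 i trivial))
  rw [himg]
  exact hK.image hΦ

private lemma integral_sum_dirac {ι : Type*} (t : Finset ι) (w : ι → ℝ) (p : ι → ℝ)
    (hw : ∀ i ∈ t, 0 ≤ w i) (f : ℝ → ℝ) :
    ∫ x, f x ∂(∑ i ∈ t, (ENNReal.ofReal (w i)) • Measure.dirac (p i)) =
      ∑ i ∈ t, w i * f (p i) := by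
  have hint : ∀ i : ι, Integrable f (Measure.dirac (p i)) := by
    intro i
    have : f =ᵐ[Measure.dirac (p i)] (fun _ => f (p i)) := by
      rw [MeasureTheory.ae_dirac_eq]
      exact Filter.eventually_pure.2 rfl
    exact (integrable_congr this).2 (integrable_const _)
  rw [MeasureTheory.integral_finset_sum_measure
    (fun i _ => (hint i).smul_measure ENNReal.ofReal_ne_top)]
  refine Finset.sum_congr rfl fun i hi => ?_
  rw [MeasureTheory.integral_smul_measure, MeasureTheory.integral_dirac,
    ENNReal.toReal_ofReal (hw i hi), smul_eq_mul]

/-- If `F` is continuous on `[-M, M]`, `K ≥ 1` and the best uniform polynomial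
approximation error `δ = δ_{K,M}` is positive, then there exist probability measures
`ν₀, ν₁` supported in `[-M, M]` with matching moments up to order `K` and
`∫ F dν₀ - ∫ F dν₁ = 2δ`. -/
theorem exists_measures_matching_moments
    (F : ℝ → ℝ) (M : ℝ) (hM : 0 < M) (K : ℕ) (hK : 1 ≤ K)
    (hF : ContinuousOn F (Icc (-M) M)) (δ : ℝ)
    (hδ : δ = sInf {e : ℝ | ∃ P : Polynomial ℝ, P.natDegree ≤ K ∧
        e = ⨆ x : Icc (-M) M, |F (x : ℝ) - P.eval (x : ℝ)|})
    (hδpos : 0 < δ) :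
    ∃ ν₀ ν₁ : Measure ℝ, IsProbabilityMeasure ν₀ ∧ IsProbabilityMeasure ν₁ ∧
      ν₀ (Icc (-M) M)ᶜ = 0 ∧ ν₁ (Icc (-M) M)ᶜ = 0 ∧
      (∀ l : ℕ, l ≤ K → ∫ t, t ^ l ∂ν₀ = ∫ t, t ^ l ∂ν₁) ∧
      (∫ t, F t ∂ν₀) - (∫ t, F t ∂ν₁) = 2 * δ := by
  have h0mem : (0 : ℝ) ∈ Icc (-M) M := ⟨by linarith, by linarith⟩
  haveI : Nonempty (Icc (-M) M) := ⟨⟨0, h0mem⟩⟩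
  -- the moment curve
  set c : ℝ → (Fin (K + 2) → ℝ) := fun x i => if (i : ℕ) ≤ K then x ^ (i : ℕ) else F x with hc_def
  have hc_cont : ContinuousOn c (Icc (-M) M) := by
    rw [continuousOn_pi]
    intro i
    by_cases h : (i : ℕ) ≤ K
    · simp only [hc_def, h, if_true]
      exact (continuous_pow _).continuousOn
    · simp only [hc_def, h, if_false]
      exact hF
  set S : Set (Fin (K + 2) → ℝ) := c '' (Icc (-M) M) with hS_def
  have hS : IsCompact S := isCompact_Icc.image_of_continuousOn hc_cont
  set T : Set (Fin (K + 2) → ℝ) := S - S with hT_def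
  have hT : IsCompact T := by
    have : T = (fun p : (Fin (K+2) → ℝ) × (Fin (K+2) → ℝ) => p.1 - p.2) '' (S ×ˢ S) := by
      rw [Set.image_prod]
      exact Set.image2_sub.symm
    rw [this]
    exact (hS.prod hS).image (continuous_fst.sub continuous_snd)
  set D : Set (Fin (K + 2) → ℝ) := convexHull ℝ T with hD_def
  have hD : IsCompact D := isCompact_convexHull_of_isCompact hT
  set v : Fin (K + 2) → ℝ := fun i => if (i : ℕ) ≤ K then 0 else 2 * δ with hv_def
  -- representation of linear functionals
  have hf_repr : ∀ (f : (Fin (K + 2) → ℝ) →L[ℝ] ℝ) (y : Fin (K + 2) → ℝ),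
      f y = ∑ i : Fin (K + 2), y i * f (Pi.single i 1) := by
    intro f y
    have hy : y = ∑ i : Fin (K + 2), y i • (Pi.single i 1 : Fin (K + 2) → ℝ) := by
      funext j
      simp [Pi.single_apply, Finset.sum_ite_eq, mul_comm]
    conv_lhs => rw [hy]
    rw [map_sum]
    simp [smul_eq_mul]
  -- the key membership
  have hvD : v ∈ D := by
    by_contra hv
    obtain ⟨f, u, hfu, huv⟩ :=
      geometric_hahn_banach_closed_point (convex_convexHull ℝ T) hD.isClosed hv
    set g : Fin (K + 2) → ℝ := fun i => f (Pi.single i 1) with hg_def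
    set γ : ℝ := g (Fin.last (K + 1)) with hγ_def
    have hmemD : ∀ x ∈ Icc (-M) M, ∀ y ∈ Icc (-M) M, c x - c y ∈ D :=
      fun x hx y hy => subset_convexHull ℝ T
        (Set.sub_mem_sub (Set.mem_image_of_mem c hx) (Set.mem_image_of_mem c hy))
    have hu0 : 0 < u := by
      have h00 := hfu _ (hmemD 0 h0mem 0 h0mem)
      rw [sub_self, map_zero] at h00
      exact h00
    have hlast : ¬ ((Fin.last (K + 1) : ℕ) ≤ K) := by simp [Fin.last]
    have hfv : f v = 2 * δ * γ := by
      rw [hf_repr f v, Fin.sum_univ_castSucc]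
      have h1 : ∀ i : Fin (K + 1), v i.castSucc * g i.castSucc = 0 := by
        intro i
        have hi : (i : ℕ) ≤ K := Nat.lt_succ_iff.mp i.isLt
        simp [hv_def, hi]
      rw [Finset.sum_congr rfl (fun i _ => h1 i), Finset.sum_const_zero, zero_add]
      simp [hv_def, hlast, hγ_def, hg_def]
    have hγpos : 0 < γ := by nlinarith
    have hG : ∀ x : ℝ, f (c x) =
        (∑ l : Fin (K + 1), g l.castSucc * x ^ (l : ℕ)) + γ * F x := by
      intro x
      rw [hf_repr f (c x), Fin.sum_univ_castSucc]
      congr 1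
      · refine Finset.sum_congr rfl fun l _ => ?_
        have hl : (l : ℕ) ≤ K := Nat.lt_succ_iff.mp l.isLt
        simp [hc_def, hl, hg_def, mul_comm]
      · simp [hc_def, hlast, hγ_def, hg_def, mul_comm]
    -- the candidate polynomial
    set Q : Polynomial ℝ :=
      ∑ l : Fin (K + 1), Polynomial.C (-(g l.castSucc / γ)) * Polynomial.X ^ (l : ℕ) with hQ_def
    have hQdeg : Q.natDegree ≤ K := by
      refine Polynomial.natDegree_sum_le_of_forall_le _ _ fun l _ => ?_
      exact le_trans (Polynomial.natDegree_C_mul_X_pow_le _ _) (Nat.lt_succ_iff.mp l.isLt)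
    have hQeval : ∀ x : ℝ, Q.eval x = ∑ l : Fin (K + 1), -(g l.castSucc / γ) * x ^ (l : ℕ) := by
      intro x
      rw [hQ_def, Polynomial.eval_finset_sum]
      simp
    have hFQ : ∀ x : ℝ, F x - Q.eval x = f (c x) / γ := by
      intro x
      rw [hQeval, hG]
      rw [Finset.sum_congr rfl (fun (l : Fin (K + 1)) _ => show -(g l.castSucc / γ) * x ^ (l : ℕ)
        = -(g l.castSucc * x ^ (l : ℕ)) / γ from by ring), ← Finset.sum_div,
        Finset.sum_neg_distrib]
      field_simp
      ring
    have hcont : ContinuousOn (fun x => F x - Q.eval x) (Icc (-M) M) :=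
      hF.sub (Polynomial.continuous Q).continuousOn
    obtain ⟨xM, hxM, hmax⟩ := isCompact_Icc.exists_isMaxOn ⟨0, h0mem⟩ hcont
    obtain ⟨xm, hxm, hmin⟩ := isCompact_Icc.exists_isMinOn ⟨0, h0mem⟩ hcont
    rw [isMaxOn_iff] at hmax
    rw [isMinOn_iff] at hmin
    set mx := F xM - Q.eval xM with hmx_def
    set mn := F xm - Q.eval xm with hmn_def
    have hosc : mx - mn < 2 * δ := by
      have h1 : f (c xM - c xm) < u := hfu _ (hmemD xM hxM xm hxm)
      rw [map_sub] at h1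
      have h2 : mx - mn = (f (c xM) - f (c xm)) / γ := by
        rw [hmx_def, hmn_def, hFQ, hFQ]; ring
      rw [h2]
      rw [div_lt_iff₀ hγpos]
      have h3 : u < 2 * δ * γ := by rw [← hfv]; exact huv
      linarith
    set Q' : Polynomial ℝ := Q + Polynomial.C ((mx + mn) / 2) with hQ'_def
    have hQ'deg : Q'.natDegree ≤ K :=
      le_trans (Polynomial.natDegree_add_le _ _)
        (by simp [Polynomial.natDegree_C, hQdeg])
    have hQ'eval : ∀ x : ℝ, Q'.eval x = Q.eval x + (mx + mn) / 2 := by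
      intro x; simp [hQ'_def]
    set e' : ℝ := ⨆ x : Icc (-M) M, |F (x : ℝ) - Q'.eval (x : ℝ)| with he'_def
    have hbdd : BddBelow {e : ℝ | ∃ P : Polynomial ℝ, P.natDegree ≤ K ∧
        e = ⨆ x : Icc (-M) M, |F (x : ℝ) - P.eval (x : ℝ)|} := by
      refine ⟨0, fun e he => ?_⟩
      obtain ⟨P, _, rfl⟩ := he
      exact Real.iSup_nonneg fun x => abs_nonneg _
    have hδle : δ ≤ e' := by
      rw [hδ]
      exact csInf_le hbdd ⟨Q', hQ'deg, rfl⟩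
    have he'le : e' ≤ (mx - mn) / 2 := by
      refine ciSup_le fun x => ?_
      rw [hQ'eval]
      rw [abs_le]
      constructor
      · linarith [hmin x x.2]
      · linarith [hmax x x.2]
    linarith
  -- extract a finite convex combination
  rw [hD_def, convexHull_eq] at hvD
  obtain ⟨ι, t, w, z, hw0, hw1, hzT, hcm⟩ := hvD
  rw [Finset.centerMass_eq_of_sum_1 _ _ hw1] at hcm
  have hzrep : ∀ i : {i // i ∈ t}, ∃ x ∈ Icc (-M) M, ∃ y ∈ Icc (-M) M,
      c x - c y = z i := by
    rintro ⟨i, hi⟩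
    have := hzT i hi
    rw [hT_def, Set.mem_sub] at this
    obtain ⟨a, ha, b, hb, hab⟩ := this
    obtain ⟨x, hx, rfl⟩ := ha
    obtain ⟨y, hy, rfl⟩ := hb
    exact ⟨x, hx, y, hy, hab⟩
  choose p hp q hq hpq using hzrep
  -- define the measures
  set ν₀ : Measure ℝ := ∑ i ∈ t.attach, (ENNReal.ofReal (w i)) • Measure.dirac (p i) with hν₀
  set ν₁ : Measure ℝ := ∑ i ∈ t.attach, (ENNReal.ofReal (w i)) • Measure.dirac (q i) with hν₁
  have hw0' : ∀ i ∈ t.attach, 0 ≤ w (i : ι) := fun i _ => hw0 i i.2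
  have hw1' : ∑ i ∈ t.attach, w (i : ι) = 1 := by rw [Finset.sum_attach t w]; exact hw1
  have hprob : ∀ (r : {i // i ∈ t} → ℝ),
      IsProbabilityMeasure (∑ i ∈ t.attach, (ENNReal.ofReal (w i)) • Measure.dirac (r i)) := by
    intro r
    constructor
    rw [Measure.finset_sum_apply]
    have : ∀ i ∈ t.attach, (ENNReal.ofReal (w (i : ι)) • Measure.dirac (r i)) Set.univ
        = ENNReal.ofReal (w (i : ι)) := by
      intro i _
      simp
    rw [Finset.sum_congr rfl this, ← ENNReal.ofReal_sum_of_nonneg hw0', hw1']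
    simp
  have hcompl : ∀ (r : {i // i ∈ t} → ℝ), (∀ i, r i ∈ Icc (-M) M) →
      (∑ i ∈ t.attach, (ENNReal.ofReal (w i)) • Measure.dirac (r i)) (Icc (-M) M)ᶜ = 0 := by
    intro r hr
    rw [Measure.finset_sum_apply]
    refine Finset.sum_eq_zero fun i _ => ?_
    rw [Measure.smul_apply, Measure.dirac_apply]
    rw [Set.indicator_of_notMem (by simpa using hr i)]
    simp
  -- the coordinate identities
  have hcoord : ∀ j : Fin (K + 2),
      ∑ i ∈ t.attach, w (i : ι) * (c (p i) j - c (q i) j) = v j := by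
    intro j
    have h1 : ∑ i ∈ t.attach, w (i : ι) * (c (p i) j - c (q i) j)
        = ∑ i ∈ t.attach, w (i : ι) * z (i : ι) j := by
      refine Finset.sum_congr rfl fun i _ => ?_
      rw [← hpq i]
      simp
    rw [h1]
    have h2 : ∑ i ∈ t.attach, w (i : ι) * z (i : ι) j = ∑ i ∈ t, w i * z i j :=
      Finset.sum_attach t (fun i => w i * z i j)
    rw [h2]
    have h3 := congrFun hcm j
    rw [Finset.sum_apply] at h3
    simpa [smul_eq_mul] using h3
  have hsplit : ∀ (a b : {i // i ∈ t} → ℝ), ∑ i ∈ t.attach, w (i : ι) * (a i - b i)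
      = ∑ i ∈ t.attach, w (i : ι) * a i - ∑ i ∈ t.attach, w (i : ι) * b i := by
    intro a b
    rw [← Finset.sum_sub_distrib]
    exact Finset.sum_congr rfl fun i _ => by ring
  refine ⟨ν₀, ν₁, hprob p, hprob q, hcompl p (fun i => hp i), hcompl q (fun i => hq i), ?_, ?_⟩
  · intro l hl
    rw [hν₀, hν₁, integral_sum_dirac t.attach _ _ hw0', integral_sum_dirac t.attach _ _ hw0']
    have := hcoord ⟨l, by omega⟩
    have hcl : ∀ x : ℝ, c x ⟨l, by omega⟩ = x ^ l := fun x => by simp [hc_def, hl]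
    simp only [hcl] at this
    have hexp : ∑ i ∈ t.attach, w (i : ι) * ((p i) ^ l - (q i) ^ l) = 0 := by
      rw [this]; simp [hv_def, hl]
    rw [hsplit] at hexp
    linarith
  · rw [hν₀, hν₁, integral_sum_dirac t.attach _ _ hw0', integral_sum_dirac t.attach _ _ hw0']
    have := hcoord (Fin.last (K + 1))
    have hlast : ¬ ((Fin.last (K + 1) : ℕ) ≤ K) := by simp [Fin.last]
    have hcl : ∀ x : ℝ, c x (Fin.last (K + 1)) = F x := fun x => by simp [hc_def, hlast]
    simp only [hcl] at this
    have hv2 : v (Fin.last (K + 1)) = 2 * δ := by simp [hv_def, hlast]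
    rw [hv2] at this
    rw [hsplit] at this
    linarith
end

section
/- Let ν₀ and ν₁ be probability measures supported on [-M, M] whose moments of orders 0 through K coincide, and let φ be the standard Gaussian density. Define φ_i(x) = ∫ φ(x - t) dν_i(t). Then ∫_ℝ (φ₁(x) - φ₀(x))^2 / φ(x) dx ≤ 4 Σ_{k ≥ K+1} M^{2k} / k!. -/
open MeasureTheory Set

noncomputable def φg : ℝ → ℝ := fun x => (2 * Real.pi) ^ (-(1:ℝ)/2) * Real.exp (-x ^ 2 / 2)

lemma φg_pos (x : ℝ) : 0 < φg x := by unfold φg; positivity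

lemma φg_cont : Continuous φg := by unfold φg; continuity

lemma φg_integrable : Integrable φg := by
  unfold φg
  apply Integrable.const_mul
  have : (fun x : ℝ => Real.exp (-x ^ 2 / 2)) = fun x : ℝ => Real.exp (-(1/2) * x ^ 2) := by
    funext x; ring_nf
  rw [this]
  exact integrable_exp_neg_mul_sq (by norm_num)

lemma φg_int : ∫ x, φg x = 1 := by
  unfold φg
  rw [integral_const_mul]
  have : (fun x : ℝ => Real.exp (-x ^ 2 / 2)) = fun x : ℝ => Real.exp (-(1/2) * x ^ 2) := by
    funext x; ring_nf
  rw [this, integral_gaussian]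
  have h2π : (0:ℝ) < 2 * Real.pi := by positivity
  rw [show Real.pi / (1/2) = 2 * Real.pi by ring, Real.sqrt_eq_rpow, ← Real.rpow_add h2π]
  norm_num

lemma φg_mul (x t t' : ℝ) : φg (x - t) * φg (x - t') / φg x = Real.exp (t * t') * φg (x - t - t') := by
  unfold φg
  rw [div_eq_iff (by positivity)]
  have key : Real.exp (-(x - t) ^ 2 / 2) * Real.exp (-(x - t') ^ 2 / 2)
      = Real.exp (t*t') * Real.exp (-(x - t - t') ^ 2 / 2) * Real.exp (-x^2/2) := by
    rw [← Real.exp_add, ← Real.exp_add, ← Real.exp_add]; congr 1; ring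
  linear_combination ((2 * Real.pi) ^ (-(1:ℝ)/2))^2 * key

lemma ae_mem_Icc (M : ℝ) (μ : Measure ℝ) (hμ : μ (Icc (-M) M)ᶜ = 0) :
    ∀ᵐ t ∂μ, t ∈ Icc (-M) M := by
  rw [ae_iff]
  simpa [Set.compl_def] using hμ

lemma mom_bound (M : ℝ) (μ : Measure ℝ) [IsProbabilityMeasure μ]
    (hμ : μ (Icc (-M) M)ᶜ = 0) (k : ℕ) : |∫ t, t ^ k ∂μ| ≤ M ^ k := by
  have h := norm_integral_le_of_norm_le_const (μ := μ) (f := fun t => t ^ k) (C := M ^ k) ?_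
  · simpa using h
  · filter_upwards [ae_mem_Icc M μ hμ] with t ht
    obtain ⟨h1, h2⟩ := ht
    rw [norm_pow, Real.norm_eq_abs]
    exact pow_le_pow_left₀ (abs_nonneg t) (abs_le.2 ⟨h1, h2⟩) k

lemma prod_supp (M : ℝ) (μ ν : Measure ℝ) [IsProbabilityMeasure μ] [IsProbabilityMeasure ν]
    (hμ : μ (Icc (-M) M)ᶜ = 0) (hν : ν (Icc (-M) M)ᶜ = 0) :
    ∀ᵐ p : ℝ × ℝ ∂(μ.prod ν), p.1 ∈ Icc (-M) M ∧ p.2 ∈ Icc (-M) M := by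
  rw [ae_iff]
  apply measure_mono_null
    (show {p : ℝ × ℝ | ¬(p.1 ∈ Icc (-M) M ∧ p.2 ∈ Icc (-M) M)}
        ⊆ ((Icc (-M) M)ᶜ ×ˢ (univ : Set ℝ)) ∪ ((univ : Set ℝ) ×ˢ (Icc (-M) M)ᶜ) from ?_)
  · apply measure_union_null <;> rw [Measure.prod_prod] <;> simp [hμ, hν]
  · intro p hp
    simp only [mem_setOf_eq, not_and_or] at hp
    rcases hp with h | h
    · exact Or.inl ⟨h, mem_univ _⟩
    · exact Or.inr ⟨mem_univ _, h⟩

lemma exp_bound (M : ℝ) (p : ℝ × ℝ) (hp : p.1 ∈ Icc (-M) M ∧ p.2 ∈ Icc (-M) M) :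
    Real.exp (p.1 * p.2) ≤ Real.exp (M * M) := by
  apply Real.exp_le_exp.2
  obtain ⟨⟨h1, h2⟩, h3, h4⟩ := hp
  have hM : 0 ≤ M := le_trans (abs_nonneg p.1) (abs_le.2 ⟨h1, h2⟩)
  calc p.1 * p.2 ≤ |p.1 * p.2| := le_abs_self _
    _ = |p.1| * |p.2| := abs_mul _ _
    _ ≤ M * M := mul_le_mul (abs_le.2 ⟨h1, h2⟩) (abs_le.2 ⟨h3, h4⟩) (abs_nonneg _) hM

lemma cross_integral (M : ℝ) (μ ν : Measure ℝ) [IsProbabilityMeasure μ] [IsProbabilityMeasure ν]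
    (hμ : μ (Icc (-M) M)ᶜ = 0) (hν : ν (Icc (-M) M)ᶜ = 0) :
    Integrable (fun x => (∫ t, φg (x-t) ∂μ) * (∫ t, φg (x-t) ∂ν) / φg x) volume ∧
    ∫ x, (∫ t, φg (x-t) ∂μ) * (∫ t, φg (x-t) ∂ν) / φg x
      = ∫ p : ℝ × ℝ, Real.exp (p.1 * p.2) ∂(μ.prod ν) := by
  have hHcont : Continuous (fun q : (ℝ × ℝ) × ℝ => Real.exp (q.1.1 * q.1.2) * φg (q.2 - q.1.1 - q.1.2)) := by
    apply Continuous.mul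
    · exact Real.continuous_exp.comp ((continuous_fst.comp continuous_fst).mul
        ((continuous_snd.comp continuous_fst)))
    · exact φg_cont.comp ((continuous_snd.sub (continuous_fst.comp continuous_fst)).sub
        (continuous_snd.comp continuous_fst))
  have hinner : ∀ p : ℝ × ℝ, ∫ x, Real.exp (p.1 * p.2) * φg (x - p.1 - p.2) = Real.exp (p.1 * p.2) := by
    intro p
    rw [integral_const_mul]
    have : ∫ x, φg (x - p.1 - p.2) = ∫ x, φg x := by
      simp_rw [sub_sub]
      exact integral_sub_right_eq_self φg (p.1 + p.2)
    rw [this, φg_int, mul_one]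
  have hinnerInt : ∀ p : ℝ × ℝ, Integrable (fun x => Real.exp (p.1 * p.2) * φg (x - p.1 - p.2)) volume := by
    intro p
    apply Integrable.const_mul
    simp_rw [sub_sub]
    exact φg_integrable.comp_sub_right (p.1 + p.2)
  have hHint : Integrable (fun q : (ℝ × ℝ) × ℝ => Real.exp (q.1.1 * q.1.2) * φg (q.2 - q.1.1 - q.1.2))
      ((μ.prod ν).prod volume) := by
    rw [integrable_prod_iff hHcont.aestronglyMeasurable]
    constructor
    · exact Filter.Eventually.of_forall fun p => hinnerInt p
    · have heq : (fun p : ℝ × ℝ => ∫ x, ‖Real.exp (p.1 * p.2) * φg (x - p.1 - p.2)‖)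
          = fun p => Real.exp (p.1 * p.2) := by
        funext p
        have : ∀ x, ‖Real.exp (p.1 * p.2) * φg (x - p.1 - p.2)‖
            = Real.exp (p.1 * p.2) * φg (x - p.1 - p.2) := fun x => by
          rw [Real.norm_of_nonneg (mul_nonneg (Real.exp_nonneg _) (φg_pos _).le)]
        simp_rw [this]
        exact hinner p
      rw [heq]
      apply Integrable.mono' (integrable_const (Real.exp (M * M)))
      · exact (Real.continuous_exp.comp (continuous_fst.mul continuous_snd)).aestronglyMeasurable
      · filter_upwards [prod_supp M μ ν hμ hν] with p hp
        rw [Real.norm_of_nonneg (Real.exp_nonneg _)]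
        exact exp_bound M p hp
  have hfun : ∀ x : ℝ, ∫ p : ℝ × ℝ, Real.exp (p.1 * p.2) * φg (x - p.1 - p.2) ∂(μ.prod ν)
      = (∫ t, φg (x-t) ∂μ) * (∫ t, φg (x-t) ∂ν) / φg x := by
    intro x
    have h1 : ∀ p : ℝ × ℝ, Real.exp (p.1 * p.2) * φg (x - p.1 - p.2)
        = (φg x)⁻¹ * (φg (x - p.1) * φg (x - p.2)) := by
      intro p
      rw [← φg_mul x p.1 p.2, div_eq_mul_inv, mul_comm]
    simp_rw [h1]
    rw [integral_const_mul,
      show (∫ (a : ℝ × ℝ), φg (x - a.1) * φg (x - a.2) ∂μ.prod ν)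
        = (∫ t, φg (x-t) ∂μ) * ∫ t, φg (x-t) ∂ν from
        integral_prod_mul (fun t => φg (x-t)) (fun t => φg (x-t))]
    ring
  constructor
  · have := hHint.integral_prod_right
    simp_rw [hfun] at this
    exact this
  · have hswap := integral_integral_swap (f := fun (p : ℝ × ℝ) (x : ℝ) =>
      Real.exp (p.1 * p.2) * φg (x - p.1 - p.2)) hHint
    simp_rw [hinner, hfun] at hswap
    exact hswap.symm

lemma exp_series (M : ℝ) (μ ν : Measure ℝ) [IsProbabilityMeasure μ] [IsProbabilityMeasure ν]
    (hμ : μ (Icc (-M) M)ᶜ = 0) (hν : ν (Icc (-M) M)ᶜ = 0) :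
    ∫ p : ℝ × ℝ, Real.exp (p.1 * p.2) ∂(μ.prod ν)
      = ∑' k : ℕ, (∫ t, t ^ k ∂μ) * (∫ t, t ^ k ∂ν) / (Nat.factorial k : ℝ) := by
  have hprod := prod_supp M μ ν hμ hν
  have hexp : ∀ p : ℝ × ℝ, Real.exp (p.1 * p.2)
      = ∑' k : ℕ, (p.1 * p.2) ^ k / (Nat.factorial k : ℝ) := by
    intro p
    rw [Real.exp_eq_exp_ℝ, NormedSpace.exp_eq_tsum_div]
  simp_rw [hexp]
  rw [integral_tsum]
  · congr 1
    funext k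
    simp_rw [mul_pow, div_eq_mul_inv]
    rw [integral_mul_const,
      show (∫ (a : ℝ × ℝ), a.1 ^ k * a.2 ^ k ∂μ.prod ν)
        = (∫ t, t ^ k ∂μ) * ∫ t, t ^ k ∂ν from
        integral_prod_mul (fun t => t ^ k) (fun t => t ^ k)]
  · intro k
    exact (Continuous.aestronglyMeasurable (by continuity))
  · apply ne_top_of_le_ne_top
      (b := ∑' k : ℕ, ENNReal.ofReal ((M * M) ^ k / (Nat.factorial k : ℝ)))
    · rw [← ENNReal.ofReal_tsum_of_nonneg]
      · exact ENNReal.ofReal_ne_top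
      · intro k
        have hMM := mul_self_nonneg M
        positivity
      · exact (Real.summable_pow_div_factorial (M * M))
    · apply ENNReal.tsum_le_tsum
      intro k
      have hb : ∀ᵐ p : ℝ × ℝ ∂(μ.prod ν),
          (‖(p.1 * p.2) ^ k / (Nat.factorial k : ℝ)‖₊ : ENNReal)
            ≤ ENNReal.ofReal ((M * M) ^ k / (Nat.factorial k : ℝ)) := by
        filter_upwards [hprod] with p hp
        rw [show ((‖(p.1 * p.2) ^ k / (Nat.factorial k : ℝ)‖₊ : ENNReal)) = ENNReal.ofReal ‖(p.1 * p.2) ^ k / (Nat.factorial k : ℝ)‖ from (ofReal_norm _).symm]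
        apply ENNReal.ofReal_le_ofReal
        rw [norm_div, norm_pow, norm_mul]
        obtain ⟨⟨h1, h2⟩, h3, h4⟩ := hp
        have hM : 0 ≤ M := le_trans (norm_nonneg p.1) (abs_le.2 ⟨h1, h2⟩)
        rw [Real.norm_natCast]
        have hb1 : ‖p.1‖ ≤ M := abs_le.2 ⟨h1, h2⟩
        have hb2 : ‖p.2‖ ≤ M := abs_le.2 ⟨h3, h4⟩
        gcongr
      calc ∫⁻ p, (‖(p.1 * p.2) ^ k / (Nat.factorial k : ℝ)‖₊ : ENNReal) ∂(μ.prod ν)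
          ≤ ∫⁻ _, ENNReal.ofReal ((M * M) ^ k / (Nat.factorial k : ℝ)) ∂(μ.prod ν) :=
            lintegral_mono_ae hb
        _ = ENNReal.ofReal ((M * M) ^ k / (Nat.factorial k : ℝ)) := by
            rw [lintegral_const, measure_univ, mul_one]

/-- If `ν₀, ν₁` are probability measures supported in `[-M, M]` whose moments up to
order `K` coincide, and `φ` is the standard Gaussian density, then with
`φᵢ(x) = ∫ φ(x - t) dνᵢ(t)` we have
`∫ (φ₁ - φ₀)^2 / φ ≤ 4 * ∑_{k ≥ K+1} M^(2k) / k!`. -/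
theorem chi_sq_bound_moment_matching
    (M : ℝ) (hM : 0 < M) (K : ℕ) (ν₀ ν₁ : Measure ℝ)
    [IsProbabilityMeasure ν₀] [IsProbabilityMeasure ν₁]
    (hs₀ : ν₀ (Icc (-M) M)ᶜ = 0) (hs₁ : ν₁ (Icc (-M) M)ᶜ = 0)
    (hmom : ∀ l : ℕ, l ≤ K → ∫ t, t ^ l ∂ν₀ = ∫ t, t ^ l ∂ν₁)
    (φ : ℝ → ℝ) (hφ : φ = fun x => (2 * Real.pi) ^ (-(1:ℝ)/2) * Real.exp (-x ^ 2 / 2))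
    (φ₀ φ₁ : ℝ → ℝ)
    (hφ₀ : φ₀ = fun x => ∫ t, φ (x - t) ∂ν₀)
    (hφ₁ : φ₁ = fun x => ∫ t, φ (x - t) ∂ν₁) :
    ∫ x, (φ₁ x - φ₀ x) ^ 2 / φ x
      ≤ 4 * ∑' k : {k : ℕ // K + 1 ≤ k}, M ^ (2 * (k : ℕ)) / (Nat.factorial k : ℝ) := by
  have hφg : φ = φg := hφ
  subst hφ₀ hφ₁ hφg
  -- moments
  set m₀ : ℕ → ℝ := fun k => ∫ t, t ^ k ∂ν₀ with hm₀
  set m₁ : ℕ → ℝ := fun k => ∫ t, t ^ k ∂ν₁ with hm₁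
  -- cross integrals
  obtain ⟨hI₁₁, hE₁₁⟩ := cross_integral M ν₁ ν₁ hs₁ hs₁
  obtain ⟨hI₁₀, hE₁₀⟩ := cross_integral M ν₁ ν₀ hs₁ hs₀
  obtain ⟨hI₀₀, hE₀₀⟩ := cross_integral M ν₀ ν₀ hs₀ hs₀
  -- pointwise decomposition
  have hpt : (fun x => ((∫ t, φg (x - t) ∂ν₁) - ∫ t, φg (x - t) ∂ν₀) ^ 2 / φg x)
      = fun x => ((∫ t, φg (x-t) ∂ν₁) * (∫ t, φg (x-t) ∂ν₁) / φg x)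
          - 2 * ((∫ t, φg (x-t) ∂ν₁) * (∫ t, φg (x-t) ∂ν₀) / φg x)
          + ((∫ t, φg (x-t) ∂ν₀) * (∫ t, φg (x-t) ∂ν₀) / φg x) := by
    funext x
    have hc : φg x ≠ 0 := (φg_pos x).ne'
    field_simp
    ring
  rw [hpt]
  have hsub : Integrable (fun x => ((∫ t, φg (x-t) ∂ν₁) * (∫ t, φg (x-t) ∂ν₁) / φg x)
      - 2 * ((∫ t, φg (x-t) ∂ν₁) * (∫ t, φg (x-t) ∂ν₀) / φg x)) volume :=
    hI₁₁.sub (hI₁₀.const_mul 2)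
  rw [integral_add hsub hI₀₀]
  rw [integral_sub hI₁₁ (hI₁₀.const_mul 2), integral_const_mul, hE₁₁, hE₁₀, hE₀₀,
    exp_series M ν₁ ν₁ hs₁ hs₁, exp_series M ν₁ ν₀ hs₁ hs₀, exp_series M ν₀ ν₀ hs₀ hs₀]
  -- summability
  have hMpos : (0:ℝ) ≤ M := hM.le
  have hg : Summable (fun k : ℕ => (M * M) ^ k / (Nat.factorial k : ℝ)) :=
    Real.summable_pow_div_factorial (M * M)
  have hbnd : ∀ (μ ν : Measure ℝ) [IsProbabilityMeasure μ] [IsProbabilityMeasure ν],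
      μ (Icc (-M) M)ᶜ = 0 → ν (Icc (-M) M)ᶜ = 0 →
      Summable (fun k : ℕ => (∫ t, t ^ k ∂μ) * (∫ t, t ^ k ∂ν) / (Nat.factorial k : ℝ)) := by
    intro μ ν _ _ hμ hν
    apply Summable.of_norm_bounded hg
    intro k
    rw [norm_div, norm_mul, Real.norm_natCast]
    have hnum : ‖∫ t, t ^ k ∂μ‖ * ‖∫ t, t ^ k ∂ν‖ ≤ (M * M) ^ k := by
      calc ‖∫ t, t ^ k ∂μ‖ * ‖∫ t, t ^ k ∂ν‖ ≤ M ^ k * M ^ k :=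
          mul_le_mul (mom_bound M μ hμ k) (mom_bound M ν hν k) (norm_nonneg _) (by positivity)
        _ = (M * M) ^ k := by rw [mul_pow]
    exact div_le_div_of_nonneg_right hnum (by positivity)
  have S11 := hbnd ν₁ ν₁ hs₁ hs₁
  have S10 := hbnd ν₁ ν₀ hs₁ hs₀
  have S00 := hbnd ν₀ ν₀ hs₀ hs₀
  -- combine the three series
  set d : ℕ → ℝ := fun k => (m₁ k - m₀ k) ^ 2 / (Nat.factorial k : ℝ) with hd
  have hcomb : HasSum d
      ((∑' k : ℕ, m₁ k * m₁ k / (Nat.factorial k : ℝ))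
        - 2 * (∑' k : ℕ, m₁ k * m₀ k / (Nat.factorial k : ℝ))
        + (∑' k : ℕ, m₀ k * m₀ k / (Nat.factorial k : ℝ))) := by
    have h := (S11.hasSum.sub (S10.hasSum.mul_left 2)).add S00.hasSum
    convert h using 2 with k
    · rfl
    rw [hd]
    have : (Nat.factorial k : ℝ) ≠ 0 := Nat.cast_ne_zero.2 (Nat.factorial_ne_zero k)
    field_simp
    ring
  rw [← hcomb.tsum_eq]
  -- restrict to k ≥ K + 1
  have hsupp : Function.support d ⊆ {k : ℕ | K + 1 ≤ k} := by
    intro k hk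
    by_contra h
    simp only [mem_setOf_eq, not_le] at h
    have : m₀ k = m₁ k := hmom k (Nat.lt_succ_iff.mp h)
    apply hk
    rw [hd]
    simp [this]
  rw [← tsum_subtype_eq_of_support_subset hsupp]
  -- compare termwise
  have hSd : Summable d := hcomb.summable
  have hS4 : Summable (fun k : ℕ => 4 * (M ^ (2 * k) / (Nat.factorial k : ℝ))) := by
    apply Summable.mul_left
    have : (fun k : ℕ => M ^ (2 * k) / (Nat.factorial k : ℝ))
        = fun k : ℕ => (M * M) ^ k / (Nat.factorial k : ℝ) := by
      funext k
      rw [pow_mul, pow_two]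
    rw [this]
    exact hg
  calc ∑' k : {k : ℕ // K + 1 ≤ k}, d k
      ≤ ∑' k : {k : ℕ // K + 1 ≤ k}, 4 * (M ^ (2 * (k:ℕ)) / (Nat.factorial (k:ℕ) : ℝ)) := by
        apply (hSd.subtype _).tsum_le_tsum _ (hS4.subtype _)
        intro k
        simp only [Function.comp_apply]
        have h1 : |m₁ (k:ℕ) - m₀ (k:ℕ)| ≤ 2 * M ^ (k:ℕ) := by
          calc |m₁ (k:ℕ) - m₀ (k:ℕ)| ≤ |m₁ (k:ℕ)| + |m₀ (k:ℕ)| := abs_sub _ _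
            _ ≤ M ^ (k:ℕ) + M ^ (k:ℕ) :=
              add_le_add (mom_bound M ν₁ hs₁ _) (mom_bound M ν₀ hs₀ _)
            _ = 2 * M ^ (k:ℕ) := by ring
        have h2 : (m₁ (k:ℕ) - m₀ (k:ℕ)) ^ 2 ≤ 4 * M ^ (2 * (k:ℕ)) := by
          calc (m₁ (k:ℕ) - m₀ (k:ℕ)) ^ 2 ≤ (2 * M ^ (k:ℕ)) ^ 2 :=
              sq_le_sq' (neg_le_of_abs_le h1) (le_of_abs_le h1)
            _ = 4 * M ^ (2 * (k:ℕ)) := by rw [pow_mul]; ring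
        rw [show (4:ℝ) * (M ^ (2 * (k:ℕ)) / (Nat.factorial (k:ℕ) : ℝ))
            = (4 * M ^ (2 * (k:ℕ))) / (Nat.factorial (k:ℕ) : ℝ) by ring]
        exact div_le_div_of_nonneg_right h2 (by positivity)
      _ = 4 * ∑' k : {k : ℕ // K + 1 ≤ k}, M ^ (2 * (k:ℕ)) / (Nat.factorial (k:ℕ) : ℝ) :=
        tsum_mul_left
end

section
/- Let K, M > 0 with K = c M²/8 for some 0 < c ≤ 8, and let P̂(u) = Σ_{k=1}^K a_k H_k(u) where H_k is the k-th Hermite polynomial and |a_k| ≤ B M^{-k} (1+√2)^K for all k. If ξ ~ N(θ,1) with |θ| > M, then |E[P̂(ξ)]| ≤ A · B · K (1+√2)^K e^{cθ²/16} for an absolute constant A. -/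
open MeasureTheory ProbabilityTheory Polynomial Filter

namespace MeanBoundAux

lemma integrable_pow_gauss (n : ℕ) :
    Integrable (fun x : ℝ => x ^ n * Real.exp (-x ^ 2 / 2)) := by
  have h4 : (0:ℝ) < 1/4 := by norm_num
  refine ((integrable_exp_neg_mul_sq h4).const_mul
    ((n.factorial : ℝ) * Real.exp 1)).mono' ?_ ?_
  · exact ((continuous_pow n).mul
      (Real.continuous_exp.comp (by continuity))).aestronglyMeasurable
  · filter_upwards with x
    rw [Real.norm_eq_abs, abs_mul, abs_of_nonneg (Real.exp_pos _).le, abs_pow]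
    have hf : (0:ℝ) < n.factorial := by positivity
    have h1 : |x| ^ n ≤ (n.factorial : ℝ) * Real.exp |x| := by
      have h := Real.pow_div_factorial_le_exp |x| (abs_nonneg x) n
      rw [div_le_iff₀ hf] at h
      linarith [h]
    calc |x| ^ n * Real.exp (-x ^ 2 / 2)
        ≤ (n.factorial : ℝ) * Real.exp |x| * Real.exp (-x ^ 2 / 2) := by
          exact mul_le_mul_of_nonneg_right h1 (Real.exp_pos _).le
      _ = (n.factorial : ℝ) * Real.exp (|x| + -x ^ 2 / 2) := by
          rw [mul_assoc, ← Real.exp_add]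
      _ ≤ (n.factorial : ℝ) * Real.exp (1 + -(1/4) * x ^ 2) := by
          refine mul_le_mul_of_nonneg_left (Real.exp_le_exp.mpr ?_) hf.le
          nlinarith [sq_nonneg (|x|/2 - 1), sq_abs x]
      _ = (n.factorial : ℝ) * Real.exp 1 * Real.exp (-(1/4) * x ^ 2) := by
          rw [Real.exp_add, mul_assoc]

lemma integrable_polyeval_gauss0 (p : Polynomial ℝ) :
    Integrable (fun x : ℝ => p.eval x * Real.exp (-x ^ 2 / 2)) := by
  induction p using Polynomial.induction_on' with
  | add p q hp hq => simpa [add_mul, Pi.add_def] using hp.add hq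
  | monomial n c =>
      simpa [Polynomial.eval_monomial, mul_assoc] using (integrable_pow_gauss n).const_mul c

lemma integrable_polyeval_gauss (p : Polynomial ℝ) (θ : ℝ) :
    Integrable (fun x : ℝ => p.eval x * Real.exp (-(x - θ) ^ 2 / 2)) := by
  have hm : AEStronglyMeasurable
      (fun x : ℝ => (p.comp (X + C θ)).eval x * Real.exp (-x ^ 2 / 2)) volume :=
    ((p.comp (X + C θ)).continuous_aeval.mul
      (Real.continuous_exp.comp (by continuity))).aestronglyMeasurable
  have h := ((measurePreserving_sub_right volume θ).integrable_comp hm).mpr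
    (integrable_polyeval_gauss0 (p.comp (X + C θ)))
  simp only [Function.comp_def, Polynomial.eval_comp, eval_add, eval_X, eval_C] at h
  have hxθ : ∀ x : ℝ, x - θ + θ = x := fun x => by ring
  simpa [hxθ] using h


lemma stein (p : Polynomial ℝ) (θ : ℝ) :
    ∫ x : ℝ, (x - θ) * p.eval x * Real.exp (-(x - θ) ^ 2 / 2)
      = ∫ x : ℝ, (derivative p).eval x * Real.exp (-(x - θ) ^ 2 / 2) := by
  have hu : ∀ x : ℝ, HasDerivAt (fun x => p.eval x) ((derivative p).eval x) x :=
    fun x => p.hasDerivAt x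
  have hv : ∀ x : ℝ, HasDerivAt (fun x : ℝ => Real.exp (-(x - θ) ^ 2 / 2))
      (-(x - θ) * Real.exp (-(x - θ) ^ 2 / 2)) x := by
    intro x
    have h1 : HasDerivAt (fun x : ℝ => -(x - θ) ^ 2 / 2) (-(x - θ)) x := by
      have h0 : HasDerivAt (fun x : ℝ => x - θ) 1 x := (hasDerivAt_id x).sub_const θ
      have h2 := ((h0.pow 2).neg).div_const 2
      refine h2.congr_deriv ?_
      simp
      ring
    have := h1.exp
    simpa [mul_comm] using this
  have huv' : Integrable (fun x : ℝ =>
      p.eval x * (-(x - θ) * Real.exp (-(x - θ) ^ 2 / 2))) := by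
    have := integrable_polyeval_gauss (-(X - C θ) * p) θ
    refine this.congr (Filter.Eventually.of_forall fun x => ?_)
    simp only [eval_mul, eval_neg, eval_sub, eval_X, eval_C]
    ring
  have hu'v : Integrable (fun x : ℝ =>
      (derivative p).eval x * Real.exp (-(x - θ) ^ 2 / 2)) :=
    integrable_polyeval_gauss _ θ
  have huv : Integrable (fun x : ℝ => p.eval x * Real.exp (-(x - θ) ^ 2 / 2)) :=
    integrable_polyeval_gauss _ θ
  have key := MeasureTheory.integral_mul_deriv_eq_deriv_mul_of_integrable (fun x _ => hu x) (fun x _ => hv x) huv' hu'v huv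
  have lhs : ∫ x : ℝ, p.eval x * (-(x - θ) * Real.exp (-(x - θ) ^ 2 / 2))
      = - ∫ x : ℝ, (x - θ) * p.eval x * Real.exp (-(x - θ) ^ 2 / 2) := by
    rw [← integral_neg]
    congr 1
    funext x
    ring
  rw [lhs] at key
  linarith [key]

lemma integral_hermite_gauss (θ : ℝ) (n : ℕ) :
    ∫ x : ℝ, ((hermite n).map (Int.castRingHom ℝ)).eval x * Real.exp (-(x - θ) ^ 2 / 2)
      = θ ^ n * Real.sqrt (2 * Real.pi) := by
  induction n with
  | zero =>
      simp only [hermite_zero, Polynomial.map_C, eval_C, map_one, Polynomial.map_one, eval_one, one_mul, pow_zero]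
      have h1 : ∫ x : ℝ, Real.exp (-(x - θ) ^ 2 / 2) = ∫ x : ℝ, Real.exp (-x ^ 2 / 2) :=
        integral_sub_right_eq_self (fun x => Real.exp (-x ^ 2 / 2)) θ
      rw [h1]
      have h2 : ∀ x : ℝ, Real.exp (-x ^ 2 / 2) = Real.exp (-(1/2 : ℝ) * x ^ 2) := by
        intro x; ring_nf
      simp_rw [h2]
      rw [integral_gaussian, show Real.pi / (1/2 : ℝ) = 2 * Real.pi by ring]
  | succ n ih =>
      set Hn : Polynomial ℝ := (hermite n).map (Int.castRingHom ℝ) with hHn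
      have hmap : ((hermite (n+1)).map (Int.castRingHom ℝ))
          = X * Hn - derivative Hn := by
        rw [hermite_succ]
        simp only [Polynomial.map_sub, Polynomial.map_mul, Polynomial.map_X, hHn,
          Polynomial.derivative_map]
      have hz : ∫ x : ℝ, ((x - θ) * Hn.eval x - (derivative Hn).eval x)
          * Real.exp (-(x - θ) ^ 2 / 2) = 0 := by
        have hi1 : Integrable (fun x : ℝ =>
            (x - θ) * Hn.eval x * Real.exp (-(x - θ) ^ 2 / 2)) := by
          have := integrable_polyeval_gauss ((X - C θ) * Hn) θ
          refine this.congr (Filter.Eventually.of_forall fun x => ?_)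
          simp
        have hi2 : Integrable (fun x : ℝ =>
            (derivative Hn).eval x * Real.exp (-(x - θ) ^ 2 / 2)) :=
          integrable_polyeval_gauss _ θ
        have : (fun x : ℝ => ((x - θ) * Hn.eval x - (derivative Hn).eval x)
            * Real.exp (-(x - θ) ^ 2 / 2))
            = fun x : ℝ => (x - θ) * Hn.eval x * Real.exp (-(x - θ) ^ 2 / 2)
              - (derivative Hn).eval x * Real.exp (-(x - θ) ^ 2 / 2) := by
          funext x; ring
        rw [this, integral_sub hi1 hi2, stein Hn θ, sub_self]
      have hHint : Integrable (fun x : ℝ => Hn.eval x * Real.exp (-(x - θ) ^ 2 / 2)) :=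
        integrable_polyeval_gauss _ θ
      have hsplit : (fun x : ℝ => ((hermite (n+1)).map (Int.castRingHom ℝ)).eval x
            * Real.exp (-(x - θ) ^ 2 / 2))
          = fun x : ℝ => ((x - θ) * Hn.eval x - (derivative Hn).eval x)
              * Real.exp (-(x - θ) ^ 2 / 2)
            + θ * (Hn.eval x * Real.exp (-(x - θ) ^ 2 / 2)) := by
        funext x
        rw [hmap]
        simp only [eval_sub, eval_mul, eval_X]
        ring
      have hiz : Integrable (fun x : ℝ => ((x - θ) * Hn.eval x - (derivative Hn).eval x)
          * Real.exp (-(x - θ) ^ 2 / 2)) := by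
        have := integrable_polyeval_gauss ((X - C θ) * Hn - derivative Hn) θ
        refine this.congr (Filter.Eventually.of_forall fun x => ?_)
        simp
      rw [hsplit, integral_add hiz (hHint.const_mul θ), hz, zero_add,
        integral_const_mul, ih]
      ring


lemma pdf_eq (θ x : ℝ) : gaussianPDFReal θ 1 x
    = (Real.sqrt (2 * Real.pi))⁻¹ * Real.exp (-(x - θ) ^ 2 / 2) := by
  simp [gaussianPDFReal]

lemma gaussianReal_eq (θ : ℝ) : gaussianReal θ 1 =
    volume.withDensity (fun x => ((gaussianPDFReal θ 1 x).toNNReal : ENNReal)) := by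
  rw [gaussianReal_of_var_ne_zero θ one_ne_zero]
  rfl

lemma integral_gaussianReal_eq (θ : ℝ) (g : ℝ → ℝ) :
    ∫ x, g x ∂(gaussianReal θ 1)
      = ∫ x, gaussianPDFReal θ 1 x * g x := by
  rw [gaussianReal_eq, integral_withDensity_eq_integral_smul
    ((measurable_gaussianPDFReal θ 1).real_toNNReal) g]
  congr 1
  funext x
  rw [NNReal.smul_def, smul_eq_mul, Real.coe_toNNReal _ (gaussianPDFReal_nonneg θ 1 x)]

lemma aeval_hermite_eq (u : ℝ) (n : ℕ) : (Polynomial.aeval u (hermite n) : ℝ)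
    = ((hermite n).map (Int.castRingHom ℝ)).eval u := by
  rw [Polynomial.eval_map, Polynomial.aeval_def, algebraMap_int_eq]

lemma integrable_hermite_gaussianReal (θ : ℝ) (n : ℕ) :
    Integrable (fun u : ℝ => (Polynomial.aeval u (hermite n) : ℝ)) (gaussianReal θ 1) := by
  rw [gaussianReal_eq, integrable_withDensity_iff_integrable_smul
    ((measurable_gaussianPDFReal θ 1).real_toNNReal)]
  have h := (integrable_polyeval_gauss ((hermite n).map (Int.castRingHom ℝ)) θ).const_mul
    (Real.sqrt (2 * Real.pi))⁻¹
  refine h.congr (Filter.Eventually.of_forall fun x => ?_)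
  simp only [NNReal.smul_def, smul_eq_mul]
  rw [Real.coe_toNNReal _ (gaussianPDFReal_nonneg θ 1 x), pdf_eq, aeval_hermite_eq]
  ring

lemma integral_aeval_hermite (θ : ℝ) (n : ℕ) :
    ∫ u, (Polynomial.aeval u (hermite n) : ℝ) ∂(gaussianReal θ 1) = θ ^ n := by
  rw [integral_gaussianReal_eq]
  have h : ∀ x : ℝ, gaussianPDFReal θ 1 x * (Polynomial.aeval x (hermite n) : ℝ)
      = (Real.sqrt (2 * Real.pi))⁻¹ *
        (((hermite n).map (Int.castRingHom ℝ)).eval x * Real.exp (-(x - θ) ^ 2 / 2)) := by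
    intro x
    rw [pdf_eq, aeval_hermite_eq]
    ring
  simp_rw [h]
  rw [integral_const_mul, integral_hermite_gauss]
  have hs : Real.sqrt (2 * Real.pi) ≠ 0 := by
    positivity
  field_simp

end MeanBoundAux

/-- There is an absolute constant `A > 0` such that if `K = cM²/8` with `0 < c ≤ 8`,
`P̂(u) = ∑_{k=1}^K a_k H_k(u)` with `|a_k| ≤ B (1+√2)^K / M^k`, and `ξ ~ N(θ,1)` with
`|θ| > M`, then `|E[P̂(ξ)]| ≤ A B K (1+√2)^K e^(cθ²/16)`. -/
theorem mean_bound_outside :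
    ∃ A : ℝ, 0 < A ∧
      ∀ (c M B θ : ℝ) (K : ℕ) (a : ℕ → ℝ),
        0 < c → c ≤ 8 → 0 < M → (K : ℝ) = c * M ^ 2 / 8 →
        (∀ k, 1 ≤ k → k ≤ K → |a k| ≤ B * (1 + Real.sqrt 2) ^ K / M ^ k) →
        M < |θ| →
        |∫ u, (∑ k ∈ Finset.Icc 1 K, a k * (Polynomial.aeval u (Polynomial.hermite k) : ℝ))
            ∂(gaussianReal θ 1)|
          ≤ A * B * K * (1 + Real.sqrt 2) ^ K * Real.exp (c * θ ^ 2 / 16) := by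
  refine ⟨1, one_pos, ?_⟩
  intro c M B θ K a hc hc8 hM hK ha hθ
  have hKpos : 0 < K := by
    have h0 : (0:ℝ) < (K:ℝ) := by rw [hK]; positivity
    exact_mod_cast h0
  set r : ℝ := |θ| / M with hr
  have hr1 : (1:ℝ) ≤ r := le_of_lt ((one_lt_div hM).mpr hθ)
  have hrpos : (0:ℝ) < r := lt_of_lt_of_le one_pos hr1
  have hint : ∫ u, (∑ k ∈ Finset.Icc 1 K, a k * (Polynomial.aeval u (Polynomial.hermite k) : ℝ))
      ∂(gaussianReal θ 1) = ∑ k ∈ Finset.Icc 1 K, a k * θ ^ k := by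
    rw [MeasureTheory.integral_finset_sum]
    · exact Finset.sum_congr rfl fun k _ => by
        rw [integral_const_mul, MeanBoundAux.integral_aeval_hermite]
    · intro k _
      exact (MeanBoundAux.integrable_hermite_gaussianReal θ k).const_mul _
  rw [hint]
  have hQ : (0:ℝ) < (1 + Real.sqrt 2) ^ K := by positivity
  have hB : 0 ≤ B := by
    have h1 := (abs_nonneg (a 1)).trans (ha 1 le_rfl hKpos)
    by_contra hBneg
    push_neg at hBneg
    have hlt : B * (1 + Real.sqrt 2) ^ K / M ^ 1 < 0 :=
      div_neg_of_neg_of_pos (mul_neg_of_neg_of_pos hBneg hQ) (by positivity)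
    linarith
  have hBQ : 0 ≤ B * (1 + Real.sqrt 2) ^ K := mul_nonneg hB hQ.le
  have hterm : ∀ k ∈ Finset.Icc 1 K,
      |a k * θ ^ k| ≤ B * (1 + Real.sqrt 2) ^ K * r ^ K := by
    intro k hk
    obtain ⟨hk1, hk2⟩ := Finset.mem_Icc.mp hk
    rw [abs_mul, abs_pow]
    calc |a k| * |θ| ^ k
        ≤ B * (1 + Real.sqrt 2) ^ K / M ^ k * |θ| ^ k :=
          mul_le_mul_of_nonneg_right (ha k hk1 hk2) (by positivity)
      _ = B * (1 + Real.sqrt 2) ^ K * r ^ k := by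
          rw [hr, div_pow]
          field_simp
      _ ≤ B * (1 + Real.sqrt 2) ^ K * r ^ K := by
          exact mul_le_mul_of_nonneg_left (pow_le_pow_right₀ hr1 hk2) hBQ
  have habs : |∑ k ∈ Finset.Icc 1 K, a k * θ ^ k|
      ≤ (K:ℝ) * (B * (1 + Real.sqrt 2) ^ K * r ^ K) := by
    calc |∑ k ∈ Finset.Icc 1 K, a k * θ ^ k|
        ≤ ∑ k ∈ Finset.Icc 1 K, |a k * θ ^ k| := Finset.abs_sum_le_sum_abs _ _
      _ ≤ (Finset.Icc 1 K).card • (B * (1 + Real.sqrt 2) ^ K * r ^ K) :=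
          Finset.sum_le_card_nsmul _ _ _ hterm
      _ = (K:ℝ) * (B * (1 + Real.sqrt 2) ^ K * r ^ K) := by
          rw [Nat.card_Icc, nsmul_eq_mul]
          norm_num
  have hrK : r ^ K ≤ Real.exp (c * θ ^ 2 / 16) := by
    have hlog : Real.log r ≤ r - 1 := Real.log_le_sub_one_of_pos hrpos
    have hrexp : r ^ K = Real.exp ((K:ℝ) * Real.log r) := by
      rw [← Real.log_pow, Real.exp_log (pow_pos hrpos K)]
    rw [hrexp, Real.exp_le_exp, hK]
    have hθ2 : M ^ 2 * r ^ 2 = θ ^ 2 := by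
      rw [hr]
      field_simp
      exact sq_abs θ
    have h1 : c * M ^ 2 / 8 * Real.log r ≤ c * M ^ 2 / 8 * (r - 1) :=
      mul_le_mul_of_nonneg_left hlog (by positivity)
    have h2 : c * M ^ 2 / 8 * (r - 1) ≤ c * θ ^ 2 / 16 := by
      nlinarith [mul_nonneg (mul_nonneg hc.le (sq_nonneg M)) (sq_nonneg (r - 1)),
        mul_nonneg hc.le (sq_nonneg M)]
    linarith
  calc |∑ k ∈ Finset.Icc 1 K, a k * θ ^ k|
      ≤ (K:ℝ) * (B * (1 + Real.sqrt 2) ^ K * r ^ K) := habs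
    _ ≤ (K:ℝ) * (B * (1 + Real.sqrt 2) ^ K * Real.exp (c * θ ^ 2 / 16)) := by
        refine mul_le_mul_of_nonneg_left ?_ (Nat.cast_nonneg K)
        exact mul_le_mul_of_nonneg_left hrK hBQ
    _ = 1 * B * K * (1 + Real.sqrt 2) ^ K * Real.exp (c * θ ^ 2 / 16) := by ring
end
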